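/- Let n ≥ 2, ℓ ≥ 1, and let Γ : ({0,1}^ℓ)^n → ℂ be a blockwise symmetric matchgate signature of arity nℓ whose matrix form M(Γ) has rank at least 3. Suppose σ, τ ∈ {0,1}^ℓ are such that wt(σ) and wt(τ) have the same parity, the rows M(Γ)^σ and M(Γ)^τ are linearly independent, and wt(σ+τ) = min { wt(u+v) : u, v ∈ {0,1}^ℓ, wt(u) and wt(v) have the same parity, and M(Γ)^u, M(Γ)^v are linearly independent }. Then wt(σ+τ) = 2. -/

import Mathlib

open Finset

namespace Matchgate

/-- Bitwise XOR of two bit strings. -/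
def bxor {m : ℕ} (a b : Fin m → Bool) : Fin m → Bool := fun i => Bool.xor (a i) (b i)

/-- The bit string `e_p` with a `1` in position `p` and `0` elsewhere. -/
def unit {m : ℕ} (p : Fin m) : Fin m → Bool := fun i => decide (i = p)

/-- Hamming weight of a bit string. -/
def wt {m : ℕ} (a : Fin m → Bool) : ℕ := (Finset.univ.filter fun i => a i = true).card

/-- Total Hamming weight of a blockwise bit string. -/
def wtB {n ℓ : ℕ} (α : Fin n → Fin ℓ → Bool) : ℕ := ∑ j, wt (α j)

/-- Blockwise XOR. -/
def bxorB {n ℓ : ℕ} (α β : Fin n → Fin ℓ → Bool) : Fin n → Fin ℓ → Bool :=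
  fun j => bxor (α j) (β j)

/-- The parity bit `p(a) = wt(a) mod 2` of a bit string, as a `Bool`. -/
def pB {m : ℕ} (a : Fin m → Bool) : Bool := decide (wt a % 2 = 1)

/-- A blockwise signature (blocks of size `ℓ`, `n` blocks) is blockwise symmetric if it is
invariant under every permutation of its blocks. -/
def BlockSym {n ℓ : ℕ} (Γ : (Fin n → Fin ℓ → Bool) → ℂ) : Prop :=
  ∀ (σ : Equiv.Perm (Fin n)) (α : Fin n → Fin ℓ → Bool), Γ (α ∘ σ) = Γ α

/-- The parity condition for a blockwise signature: either all even entries vanish or all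
odd entries vanish. -/
def ParityCond {n ℓ : ℕ} (Γ : (Fin n → Fin ℓ → Bool) → ℂ) : Prop :=
  (∀ α, wtB α % 2 = 0 → Γ α = 0) ∨ (∀ α, wtB α % 2 = 1 → Γ α = 0)

/-- The Matchgate Identities for a blockwise signature.  Positions are pairs `(j, i)`
(block `j`, bit `i` within the block) ordered lexicographically block-major, which is the
order of the flattened bit string `α₁α₂⋯αₙ`.  For every pattern `α` and every position set
`P`, the alternating sum `Σ_{p ∈ P} (-1)^{rank of p in P} Γ(α + e_p) Γ(α + P + e_p)`
vanishes. -/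
def MGI {n ℓ : ℕ} (Γ : (Fin n → Fin ℓ → Bool) → ℂ) : Prop :=
  ∀ (α : Fin n → Fin ℓ → Bool) (P : Finset (Fin n × Fin ℓ)),
    ∑ p ∈ P,
      (-1 : ℂ) ^ (P.filter fun q => q.1 < p.1 ∨ (q.1 = p.1 ∧ q.2 ≤ p.2)).card *
        Γ (fun j i => Bool.xor (α j i) (decide ((j, i) = p))) *
        Γ (fun j i => Bool.xor (α j i)
            (Bool.xor (decide ((j, i) ∈ P)) (decide ((j, i) = p)))) = 0

/-- Prepend an element to a length `n - 1` tuple, giving a length `n` tuple. -/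
def cons0 {n : ℕ} {X : Type*} (a : X) (b : Fin (n - 1) → X) : Fin n → X :=
  fun j => if h : (j : ℕ) = 0 then a else b ⟨(j : ℕ) - 1, by have := j.isLt; omega⟩

/-- The matrix form `M(Γ)` of a blockwise signature: rows indexed by the first block,
columns by the remaining `n - 1` blocks. -/
def matrixForm {n ℓ : ℕ} (Γ : (Fin n → Fin ℓ → Bool) → ℂ) :
    Matrix (Fin ℓ → Bool) (Fin (n - 1) → Fin ℓ → Bool) ℂ :=
  Matrix.of fun a b => Γ (cons0 a b)

/-- XOR block `j` of `α` with `c`, leaving the other blocks unchanged. -/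
def flipBlock {n ℓ : ℕ} (α : Fin n → Fin ℓ → Bool) (j : Fin n) (c : Fin ℓ → Bool) :
    Fin n → Fin ℓ → Bool := Function.update α j (bxor (α j) c)

/-- Insert block `c` at position `t` into a tuple of `n - 1` blocks. -/
def insertAt {n ℓ : ℕ} (t : Fin n) (c : Fin ℓ → Bool) (β : Fin (n - 1) → Fin ℓ → Bool) :
    Fin n → Fin ℓ → Bool :=
  fun j =>
    if h1 : (j : ℕ) = (t : ℕ) then c
    else if h2 : (j : ℕ) < (t : ℕ) then
      β ⟨(j : ℕ), by have := t.isLt; have := j.isLt; omega⟩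
    else β ⟨(j : ℕ) - 1, by have := t.isLt; have := j.isLt; omega⟩

/-- The parity condition for a flat (Boolean-bit) signature. -/
def ParityCond1 {m : ℕ} (Γ : (Fin m → Bool) → ℂ) : Prop :=
  (∀ α, wt α % 2 = 0 → Γ α = 0) ∨ (∀ α, wt α % 2 = 1 → Γ α = 0)

/-- The Matchgate Identities for a flat (Boolean-bit) signature. -/
def MGI1 {m : ℕ} (Γ : (Fin m → Bool) → ℂ) : Prop :=
  ∀ (α : Fin m → Bool) (P : Finset (Fin m)),
    ∑ p ∈ P,
      (-1 : ℂ) ^ (P.filter fun q => q ≤ p).card *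
        Γ (fun k => Bool.xor (α k) (decide (k = p))) *
        Γ (fun k => Bool.xor (α k) (Bool.xor (decide (k ∈ P)) (decide (k = p)))) = 0

lemma wt_parity {m : ℕ} (a b : Fin m → Bool) :
    wt (bxor a b) % 2 = (wt a + wt b) % 2 := by
  classical
  set A := Finset.univ.filter (fun i => a i = true) with hA
  set B := Finset.univ.filter (fun i => b i = true) with hB
  have hfil : (Finset.univ.filter fun i => bxor a b i = true) = symmDiff A B := by
    ext i
    simp only [Finset.mem_filter, Finset.mem_univ, true_and, Finset.mem_symmDiff, hA, hB, bxor]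
    cases ha' : a i <;> cases hb' : b i <;> simp [ha', hb']
  have hsd : symmDiff A B = (A ∪ B) \ (A ∩ B) := by
    ext i; simp only [Finset.mem_symmDiff, Finset.mem_sdiff, Finset.mem_union, Finset.mem_inter]
    tauto
  have hsub : A ∩ B ⊆ A ∪ B := Finset.inter_subset_left.trans Finset.subset_union_left
  have hc := Finset.card_union_add_card_inter A B
  have h1 := Finset.card_le_card hsub
  have hwa : wt a = A.card := rfl
  have hwb : wt b = B.card := rfl
  rw [wt, hfil, hsd, Finset.card_sdiff_of_subset hsub, hwa, hwb]
  omega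

lemma wt_unit {m : ℕ} (p : Fin m) : wt (unit p) = 1 := by
  have : (Finset.univ.filter fun i => unit p i = true) = {p} := by
    ext i; simp [unit]
  rw [wt, this, Finset.card_singleton]

lemma wt_pair {m : ℕ} {p q : Fin m} (h : p ≠ q) : wt (bxor (unit p) (unit q)) = 2 := by
  have hfil : (Finset.univ.filter fun i => bxor (unit p) (unit q) i = true) = {p, q} := by
    ext i
    simp only [Finset.mem_filter, Finset.mem_univ, true_and, bxor, unit, Finset.mem_insert,
      Finset.mem_singleton]
    by_cases h1 : i = p <;> by_cases h2 : i = q <;> simp_all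
  rw [wt, hfil, Finset.card_insert_of_notMem (by simpa using h), Finset.card_singleton]

lemma wt_dist {m : ℕ} (D : Fin m → Bool) {p q : Fin m} (hp : D p = true) (hq : D q = true)
    (h : p ≠ q) : wt (bxor (bxor D (unit p)) (unit q)) = wt D - 2 := by
  have hfil : (Finset.univ.filter fun i => bxor (bxor D (unit p)) (unit q) i = true)
      = (Finset.univ.filter fun i => D i = true) \ {p, q} := by
    ext i
    simp only [Finset.mem_filter, Finset.mem_univ, true_and, bxor, unit, Finset.mem_sdiff,
      Finset.mem_insert, Finset.mem_singleton]
    by_cases h1 : i = p <;> by_cases h2 : i = q <;> simp_all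
  have hsub : ({p, q} : Finset (Fin m)) ⊆ Finset.univ.filter fun i => D i = true := by
    intro x hx
    simp only [Finset.mem_insert, Finset.mem_singleton] at hx
    rcases hx with rfl | rfl <;> simp [hp, hq]
  rw [wt, hfil, Finset.card_sdiff_of_subset hsub,
    Finset.card_insert_of_notMem (by simpa using h), Finset.card_singleton]
  rfl

/-- Embed a column-block index into the full block index set (shift by one). -/
def emb {n : ℕ} (k : Fin (n - 1)) : Fin n := ⟨(k : ℕ) + 1, by have := k.isLt; omega⟩

/-- Flip a column tuple at a set of positions (all in blocks `1..n-1`). -/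
def cflip {n ℓ : ℕ} (γ : Fin (n - 1) → Fin ℓ → Bool) (Q : Finset (Fin n × Fin ℓ)) :
    Fin (n - 1) → Fin ℓ → Bool := fun k i => Bool.xor (γ k i) (decide ((emb k, i) ∈ Q))

lemma emb_ne_zero {n : ℕ} (hn : 0 < n) (k : Fin (n - 1)) : emb k ≠ (⟨0, hn⟩ : Fin n) := by
  intro h
  have : ((emb k : Fin n) : ℕ) = 0 := by rw [h]
  simp [emb] at this

lemma emb_eq_of_ne {n : ℕ} (j : Fin n) (hj : ¬ (j : ℕ) = 0) :
    emb (⟨(j : ℕ) - 1, by have := j.isLt; omega⟩ : Fin (n - 1)) = j := by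
  apply Fin.ext
  simp only [emb]
  omega


lemma cons0_congr {n : ℕ} {X : Type*} {a a' : X} {b b' : Fin (n - 1) → X}
    (h1 : a = a') (h2 : b = b') : (cons0 a b : Fin n → X) = cons0 a' b' := by
  rw [h1, h2]

/-- Master flip lemma: flipping `cons0 u γ` by an arbitrary pattern `B`. -/
lemma cons0_flip {n ℓ : ℕ} (hn : 0 < n) (u : Fin ℓ → Bool) (γ : Fin (n - 1) → Fin ℓ → Bool)
    (B : Fin n × Fin ℓ → Bool) :
    (fun (j : Fin n) (i : Fin ℓ) => Bool.xor (cons0 u γ j i) (B (j, i))) =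
      cons0 (fun i => Bool.xor (u i) (B ((⟨0, hn⟩ : Fin n), i)))
        (fun k i => Bool.xor (γ k i) (B (emb k, i))) := by
  funext j i
  by_cases hj : (j : ℕ) = 0
  · have hjz : j = (⟨0, hn⟩ : Fin n) := Fin.ext hj
    subst hjz
    simp [cons0]
  · have he := emb_eq_of_ne j hj
    simp only [cons0, dif_neg hj]
    rw [he]

lemma L1 {n ℓ : ℕ} (hn : 0 < n) (u : Fin ℓ → Bool) (γ : Fin (n - 1) → Fin ℓ → Bool)
    (r' : Fin ℓ) :
    (fun (j : Fin n) (i : Fin ℓ) =>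
        Bool.xor (cons0 u γ j i) (decide ((j, i) = ((⟨0, hn⟩ : Fin n), r')))) =
      cons0 (bxor u (unit r')) γ := by
  refine Eq.trans (cons0_flip hn u γ (fun y : Fin n × Fin ℓ =>
    decide (y = ((⟨0, hn⟩ : Fin n), r')))) (cons0_congr ?_ ?_)
  · funext i
    simp only [bxor, unit]
    congr 1
    rw [decide_eq_decide]
    simp [Prod.ext_iff]
  · funext k i
    rw [decide_eq_false (by simp [Prod.ext_iff]; intro h; exact absurd h (emb_ne_zero hn k))]
    simp

lemma L2 {n ℓ : ℕ} (hn : 0 < n) (u : Fin ℓ → Bool) (γ : Fin (n - 1) → Fin ℓ → Bool)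
    (x : Fin n × Fin ℓ) (hx : x.1 ≠ (⟨0, hn⟩ : Fin n)) :
    (fun (j : Fin n) (i : Fin ℓ) => Bool.xor (cons0 u γ j i) (decide ((j, i) = x))) =
      cons0 u (cflip γ {x}) := by
  refine Eq.trans (cons0_flip hn u γ (fun y : Fin n × Fin ℓ => decide (y = x))) (cons0_congr ?_ ?_)
  · funext i
    rw [decide_eq_false (by intro h; exact hx (by rw [← h]))]
    simp
  · funext k i
    simp only [cflip]
    congr 1
    rw [decide_eq_decide]
    simp

lemma L3 {n ℓ : ℕ} (hn : 0 < n) (u f : Fin ℓ → Bool) (γ : Fin (n - 1) → Fin ℓ → Bool)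
    (T Q : Finset (Fin n × Fin ℓ))
    (hT0 : ∀ i : Fin ℓ, (((⟨0, hn⟩ : Fin n), i) ∈ T) ↔ f i = true)
    (hTQ : ∀ (k : Fin (n - 1)) (i : Fin ℓ), ((emb k, i) ∈ T) ↔ (emb k, i) ∈ Q)
    (r' : Fin ℓ) :
    (fun (j : Fin n) (i : Fin ℓ) => Bool.xor (cons0 u γ j i)
        (Bool.xor (decide ((j, i) ∈ T)) (decide ((j, i) = ((⟨0, hn⟩ : Fin n), r'))))) =
      cons0 (bxor (bxor u f) (unit r')) (cflip γ Q) := by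
  refine Eq.trans (cons0_flip hn u γ (fun y : Fin n × Fin ℓ =>
    Bool.xor (decide (y ∈ T)) (decide (y = ((⟨0, hn⟩ : Fin n), r'))))) (cons0_congr ?_ ?_)
  · funext i
    have h1 : decide (((⟨0, hn⟩ : Fin n), i) ∈ T) = f i := by
      cases hfi : f i
      · exact decide_eq_false (fun hmem => by
          have h := (hT0 i).mp hmem; rw [hfi] at h; cases h)
      · exact decide_eq_true ((hT0 i).mpr hfi)
    have h2 : decide ((((⟨0, hn⟩ : Fin n), i) : Fin n × Fin ℓ) = ((⟨0, hn⟩ : Fin n), r'))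
        = decide (i = r') := by
      rw [decide_eq_decide]
      simp [Prod.ext_iff]
    rw [h1, h2]
    simp only [bxor, unit]
    cases u i <;> cases f i <;> cases h : decide (i = r') <;> rfl
  · funext k i
    have h1 : decide ((emb k, i) ∈ T) = decide ((emb k, i) ∈ Q) :=
      decide_eq_decide.mpr (hTQ k i)
    have h2 : decide (((emb k, i) : Fin n × Fin ℓ) = ((⟨0, hn⟩ : Fin n), r')) = false :=
      decide_eq_false (by simp [Prod.ext_iff]; intro h; exact absurd h (emb_ne_zero hn k))
    rw [h1, h2]
    simp [cflip]

lemma L4 {n ℓ : ℕ} (hn : 0 < n) (u f : Fin ℓ → Bool) (γ : Fin (n - 1) → Fin ℓ → Bool)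
    (T Q : Finset (Fin n × Fin ℓ))
    (hT0 : ∀ i : Fin ℓ, (((⟨0, hn⟩ : Fin n), i) ∈ T) ↔ f i = true)
    (hTQ : ∀ (k : Fin (n - 1)) (i : Fin ℓ), ((emb k, i) ∈ T) ↔ (emb k, i) ∈ Q)
    (x : Fin n × Fin ℓ) (hx : x.1 ≠ (⟨0, hn⟩ : Fin n)) :
    (fun (j : Fin n) (i : Fin ℓ) => Bool.xor (cons0 u γ j i)
        (Bool.xor (decide ((j, i) ∈ T)) (decide ((j, i) = x)))) =
      cons0 (bxor u f) (cflip (cflip γ Q) {x}) := by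
  refine Eq.trans (cons0_flip hn u γ (fun y : Fin n × Fin ℓ =>
    Bool.xor (decide (y ∈ T)) (decide (y = x)))) (cons0_congr ?_ ?_)
  · funext i
    have h1 : decide (((⟨0, hn⟩ : Fin n), i) ∈ T) = f i := by
      cases hfi : f i
      · exact decide_eq_false (fun hmem => by
          have h := (hT0 i).mp hmem; rw [hfi] at h; cases h)
      · exact decide_eq_true ((hT0 i).mpr hfi)
    have h2 : decide ((((⟨0, hn⟩ : Fin n), i) : Fin n × Fin ℓ) = x) = false :=
      decide_eq_false (by intro h; exact hx (by rw [← h]))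
    rw [h1, h2]
    simp [bxor]
  · funext k i
    have h1 : decide ((emb k, i) ∈ T) = decide ((emb k, i) ∈ Q) :=
      decide_eq_decide.mpr (hTQ k i)
    have h2 : decide (((emb k, i) : Fin n × Fin ℓ) = x)
        = decide ((emb k, i) ∈ ({x} : Finset (Fin n × Fin ℓ))) := by
      rw [decide_eq_decide]; simp
    rw [h1, h2]
    simp only [cflip]
    cases γ k i <;> cases h3 : decide ((emb k, i) ∈ Q) <;>
      cases h4 : decide ((emb k, i) ∈ ({x} : Finset (Fin n × Fin ℓ))) <;> rfl

lemma cflip_realize {n ℓ : ℕ} (hn : 0 < n) (γ γ' : Fin (n - 1) → Fin ℓ → Bool) :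
    ∃ Q : Finset (Fin n × Fin ℓ),
      (∀ x ∈ Q, x.1 ≠ (⟨0, hn⟩ : Fin n)) ∧ cflip γ Q = γ' := by
  classical
  refine ⟨((Finset.univ : Finset (Fin (n - 1) × Fin ℓ)).filter
      (fun k => γ k.1 k.2 ≠ γ' k.1 k.2)).image (fun k => ((emb k.1 : Fin n), k.2)), ?_, ?_⟩
  · intro x hx
    simp only [Finset.mem_image] at hx
    obtain ⟨k, -, rfl⟩ := hx
    exact emb_ne_zero hn k.1
  · funext k i
    have hmem : ((emb k, i) ∈ ((Finset.univ : Finset (Fin (n - 1) × Fin ℓ)).filter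
        (fun k => γ k.1 k.2 ≠ γ' k.1 k.2)).image (fun k => ((emb k.1 : Fin n), k.2)))
        ↔ γ k i ≠ γ' k i := by
      simp only [Finset.mem_image, Finset.mem_filter, Finset.mem_univ, true_and]
      constructor
      · rintro ⟨k', hk', heq⟩
        have h1 : emb k'.1 = (emb k : Fin n) := congrArg Prod.fst heq
        have h2 : k'.2 = i := congrArg Prod.snd heq
        have h3 : k'.1 = k := by
          apply Fin.ext
          have := congrArg Fin.val h1
          simp only [emb] at this
          omega
        rwa [h3, h2] at hk'
      · intro h
        exact ⟨(k, i), h, rfl⟩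
    simp only [cflip]
    rw [decide_eq_decide.mpr hmem]
    have hb : ∀ b c : Bool, (Bool.xor b (decide (¬ b = c))) = c := by decide
    exact hb (γ k i) (γ' k i)

lemma bxor_false {m : ℕ} (u : Fin m → Bool) : bxor u (fun _ => false) = u := by
  funext i; simp [bxor]

lemma key_compute {n ℓ : ℕ} (hn : 0 < n) (Γ : (Fin n → Fin ℓ → Bool) → ℂ) (hmgi : MGI Γ)
    (σ τ D u : Fin ℓ → Bool) (P : Finset (Fin ℓ)) (S0 : Finset (Fin n × Fin ℓ))
    (hS0 : S0 = P.image (fun r' => ((⟨0, hn⟩ : Fin n), r')))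
    (hDmem : ∀ i, i ∈ P ↔ D i = true)
    (hPeven : Even P.card)
    (r : Fin ℓ) (hr : r ∈ P)
    (hrow0 : ∀ b ∈ P, b ≠ r → matrixForm Γ (bxor u (unit b)) = 0)
    (hbx5 : bxor u (unit r) = σ)
    (hbx6 : bxor (bxor u D) (unit r) = τ)
    (hbx8 : bxor u D = bxor τ (unit r))
    (hC : matrixForm Γ u = 0 ∨
      ∃ μ : ℂ, matrixForm Γ (bxor τ (unit r)) = μ • matrixForm Γ u)
    (γ : Fin (n - 1) → Fin ℓ → Bool) (Q : Finset (Fin n × Fin ℓ))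
    (hQ : ∀ x ∈ Q, x.1 ≠ (⟨0, hn⟩ : Fin n)) :
    Γ (cons0 σ γ) * Γ (cons0 τ (cflip γ Q)) = 0 := by
  classical
  have hMapp : ∀ (v : Fin ℓ → Bool) (c : Fin (n - 1) → Fin ℓ → Bool),
      matrixForm Γ v c = Γ (cons0 v c) := fun _ _ => rfl
  have hS0mem : ∀ x : Fin n × Fin ℓ, x ∈ S0 ↔ x.1 = (⟨0, hn⟩ : Fin n) ∧ x.2 ∈ P := by
    intro x
    rw [hS0]
    simp only [Finset.mem_image]
    constructor
    · rintro ⟨r', hr', rfl⟩; exact ⟨rfl, hr'⟩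
    · rintro ⟨h1, h2⟩
      exact ⟨x.2, h2, Prod.ext_iff.mpr ⟨h1.symm, rfl⟩⟩
  have hinj : ∀ a ∈ P, ∀ b ∈ P,
      ((⟨0, hn⟩ : Fin n), a) = ((⟨0, hn⟩ : Fin n), b) → a = b :=
    fun a _ b _ hab => by simpa using congrArg Prod.snd hab
  have hS0card : S0.card = P.card := by
    rw [hS0]
    exact Finset.card_image_of_injective _ (fun a b hab => by
      simpa using congrArg Prod.snd hab)
  have hdisj : Disjoint S0 Q := by
    rw [Finset.disjoint_left]
    intro x hx hxQ
    exact hQ x hxQ ((hS0mem x).mp hx).1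
  have hT0 : ∀ i : Fin ℓ, (((⟨0, hn⟩ : Fin n), i) ∈ S0 ∪ Q) ↔ D i = true := by
    intro i
    rw [Finset.mem_union]
    constructor
    · rintro (h | h)
      · exact (hDmem i).mp ((hS0mem _).mp h).2
      · exact absurd rfl (hQ _ h)
    · intro h
      exact Or.inl ((hS0mem _).mpr ⟨rfl, (hDmem i).mpr h⟩)
  have hTQ : ∀ (k : Fin (n - 1)) (i : Fin ℓ), ((emb k, i) ∈ S0 ∪ Q) ↔ (emb k, i) ∈ Q := by
    intro k i
    rw [Finset.mem_union]
    constructor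
    · rintro (h | h)
      · exact absurd ((hS0mem _).mp h).1 (emb_ne_zero hn k)
      · exact h
    · exact Or.inr
  have hQ0 : ∀ i : Fin ℓ, (((⟨0, hn⟩ : Fin n), i) ∈ Q) ↔ (fun _ : Fin ℓ => false) i = true := by
    intro i
    simp only [Bool.false_eq_true, iff_false]
    intro h; exact hQ _ h rfl
  have hQQ : ∀ (k : Fin (n - 1)) (i : Fin ℓ), ((emb k, i) ∈ Q) ↔ (emb k, i) ∈ Q :=
    fun _ _ => Iff.rfl
  have hpow1 : (-1 : ℂ) ^ P.card = 1 := Even.neg_one_pow hPeven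
  have hsign : ∀ x ∈ Q,
      ((S0 ∪ Q).filter fun y => y.1 < x.1 ∨ (y.1 = x.1 ∧ y.2 ≤ x.2)).card
        = P.card + (Q.filter fun y => y.1 < x.1 ∨ (y.1 = x.1 ∧ y.2 ≤ x.2)).card := by
    intro x hx
    rw [Finset.filter_union,
      Finset.card_union_of_disjoint (Finset.disjoint_filter_filter hdisj)]
    congr 1
    rw [Finset.filter_true_of_mem, hS0card]
    intro y hy
    left
    rw [((hS0mem y).mp hy).1, Fin.lt_def]
    have hne : (x.1 : ℕ) ≠ 0 := fun hc => (hQ x hx) (Fin.ext hc)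
    simpa using Nat.pos_of_ne_zero hne
  -- the main MGI instance
  have h := hmgi (cons0 u γ) (S0 ∪ Q)
  rw [Finset.sum_union hdisj] at h
  -- Part B : the sum over Q vanishes
  have hB : ∑ x ∈ Q,
      (-1 : ℂ) ^ ((S0 ∪ Q).filter fun q => q.1 < x.1 ∨ (q.1 = x.1 ∧ q.2 ≤ x.2)).card *
        Γ (fun j i => Bool.xor (cons0 u γ j i) (decide ((j, i) = x))) *
        Γ (fun j i => Bool.xor (cons0 u γ j i)
            (Bool.xor (decide ((j, i) ∈ S0 ∪ Q)) (decide ((j, i) = x)))) = 0 := by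
    have hstep : ∀ x ∈ Q,
        (-1 : ℂ) ^ ((S0 ∪ Q).filter fun q => q.1 < x.1 ∨ (q.1 = x.1 ∧ q.2 ≤ x.2)).card *
          Γ (fun j i => Bool.xor (cons0 u γ j i) (decide ((j, i) = x))) *
          Γ (fun j i => Bool.xor (cons0 u γ j i)
              (Bool.xor (decide ((j, i) ∈ S0 ∪ Q)) (decide ((j, i) = x))))
        = (-1 : ℂ) ^ ((Q.filter fun q => q.1 < x.1 ∨ (q.1 = x.1 ∧ q.2 ≤ x.2)).card) *
            Γ (cons0 u (cflip γ {x})) *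
            Γ (cons0 (bxor τ (unit r)) (cflip (cflip γ Q) {x})) := by
      intro x hx
      rw [L2 hn u γ x (hQ x hx), L4 hn u D γ (S0 ∪ Q) Q hT0 hTQ x (hQ x hx), hbx8,
        hsign x hx, pow_add, hpow1, one_mul]
    refine (Finset.sum_congr rfl hstep).trans ?_
    rcases hC with h0 | ⟨μ, hμ⟩
    · refine Finset.sum_eq_zero (fun x _ => ?_)
      have hz0 : Γ (cons0 u (cflip γ {x})) = 0 := by
        have := congrFun h0 (cflip γ {x})
        rw [hMapp] at this
        simpa using this
      rw [hz0, mul_zero, zero_mul]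
    · have hst : ∀ x ∈ Q,
          (-1 : ℂ) ^ ((Q.filter fun q => q.1 < x.1 ∨ (q.1 = x.1 ∧ q.2 ≤ x.2)).card) *
            Γ (cons0 u (cflip γ {x})) *
            Γ (cons0 (bxor τ (unit r)) (cflip (cflip γ Q) {x}))
          = μ * ((-1 : ℂ) ^ ((Q.filter fun q => q.1 < x.1 ∨ (q.1 = x.1 ∧ q.2 ≤ x.2)).card) *
              Γ (cons0 u (cflip γ {x})) *
              Γ (cons0 u (cflip (cflip γ Q) {x}))) := by
        intro x _
        have hv : Γ (cons0 (bxor τ (unit r)) (cflip (cflip γ Q) {x}))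
            = μ * Γ (cons0 u (cflip (cflip γ Q) {x})) := by
          rw [← hMapp, ← hMapp, hμ]
          simp [Pi.smul_apply, smul_eq_mul]
        rw [hv]; ring
      refine (Finset.sum_congr rfl hst).trans ?_
      rw [← Finset.mul_sum]
      have h2 := hmgi (cons0 u γ) Q
      have hclean : ∀ x ∈ Q,
          (-1 : ℂ) ^ ((Q.filter fun q => q.1 < x.1 ∨ (q.1 = x.1 ∧ q.2 ≤ x.2)).card) *
            Γ (fun j i => Bool.xor (cons0 u γ j i) (decide ((j, i) = x))) *
            Γ (fun j i => Bool.xor (cons0 u γ j i)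
                (Bool.xor (decide ((j, i) ∈ Q)) (decide ((j, i) = x))))
          = (-1 : ℂ) ^ ((Q.filter fun q => q.1 < x.1 ∨ (q.1 = x.1 ∧ q.2 ≤ x.2)).card) *
              Γ (cons0 u (cflip γ {x})) *
              Γ (cons0 u (cflip (cflip γ Q) {x})) := by
        intro x hx
        rw [L2 hn u γ x (hQ x hx), L4 hn u (fun _ => false) γ Q Q hQ0 hQQ x (hQ x hx),
          bxor_false]
      rw [(Finset.sum_congr rfl hclean).symm.trans h2, mul_zero]
  -- Part A : the sum over S0 reduces to a single term
  have hA : ∑ x ∈ S0,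
      (-1 : ℂ) ^ ((S0 ∪ Q).filter fun q => q.1 < x.1 ∨ (q.1 = x.1 ∧ q.2 ≤ x.2)).card *
        Γ (fun j i => Bool.xor (cons0 u γ j i) (decide ((j, i) = x))) *
        Γ (fun j i => Bool.xor (cons0 u γ j i)
            (Bool.xor (decide ((j, i) ∈ S0 ∪ Q)) (decide ((j, i) = x))))
      = (-1 : ℂ) ^ ((S0 ∪ Q).filter fun q =>
            q.1 < ((⟨0, hn⟩ : Fin n), r).1 ∨
              (q.1 = ((⟨0, hn⟩ : Fin n), r).1 ∧ q.2 ≤ ((⟨0, hn⟩ : Fin n), r).2)).card *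
          Γ (cons0 σ γ) * Γ (cons0 τ (cflip γ Q)) := by
    have hstep : ∑ x ∈ S0,
        (-1 : ℂ) ^ ((S0 ∪ Q).filter fun q => q.1 < x.1 ∨ (q.1 = x.1 ∧ q.2 ≤ x.2)).card *
          Γ (fun j i => Bool.xor (cons0 u γ j i) (decide ((j, i) = x))) *
          Γ (fun j i => Bool.xor (cons0 u γ j i)
              (Bool.xor (decide ((j, i) ∈ S0 ∪ Q)) (decide ((j, i) = x))))
        = ∑ b ∈ P,
        (-1 : ℂ) ^ ((S0 ∪ Q).filter fun q => q.1 < ((⟨0, hn⟩ : Fin n), b).1 ∨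
            (q.1 = ((⟨0, hn⟩ : Fin n), b).1 ∧ q.2 ≤ ((⟨0, hn⟩ : Fin n), b).2)).card *
          Γ (fun j i => Bool.xor (cons0 u γ j i)
              (decide ((j, i) = ((⟨0, hn⟩ : Fin n), b)))) *
          Γ (fun j i => Bool.xor (cons0 u γ j i)
              (Bool.xor (decide ((j, i) ∈ S0 ∪ Q))
                (decide ((j, i) = ((⟨0, hn⟩ : Fin n), b))))) := by
      rw [hS0, Finset.sum_image hinj]
    rw [hstep]
    rw [Finset.sum_eq_single_of_mem r hr (fun b hb hbr => ?_)]
    · rw [L1 hn u γ r, L3 hn u D γ (S0 ∪ Q) Q hT0 hTQ r, hbx5, hbx6]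
    · rw [L1 hn u γ b]
      have h0 : Γ (cons0 (bxor u (unit b)) γ) = 0 := by
        have := congrFun (hrow0 b hb hbr) γ
        rw [hMapp] at this
        simpa using this
      rw [h0, mul_zero, zero_mul]
  rw [hA, hB, add_zero] at h
  rcases mul_eq_zero.mp h with h' | hB0
  · rcases mul_eq_zero.mp h' with h'' | hA0
    · exact absurd h'' (pow_ne_zero _ (by norm_num))
    · rw [hA0, zero_mul]
  · rw [hB0, mul_zero]


/-- for a blockwise symmetric matchgate signature with `rank M(Γ) ≥ 3`, a
weight-minimal pair of linearly independent rows of equal weight parity differs in exactly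
two bits. -/
theorem stmt5 (n ℓ : ℕ) (hn : 2 ≤ n) (hℓ : 1 ≤ ℓ)
    (Γ : (Fin n → Fin ℓ → Bool) → ℂ)
    (hsym : BlockSym Γ) (hpar : ParityCond Γ) (hmgi : MGI Γ)
    (hrank : 3 ≤ (matrixForm Γ).rank)
    (σ τ : Fin ℓ → Bool)
    (hpp : wt σ % 2 = wt τ % 2)
    (hind : LinearIndependent ℂ ![matrixForm Γ σ, matrixForm Γ τ])
    (hmin : ∀ u v : Fin ℓ → Bool, wt u % 2 = wt v % 2 →
      LinearIndependent ℂ ![matrixForm Γ u, matrixForm Γ v] →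
      wt (bxor σ τ) ≤ wt (bxor u v)) :
    wt (bxor σ τ) = 2 := by
  classical
  by_contra hne
  have hz : 0 < n := by omega
  -- unpack linear independence of the pair
  have h2 := linearIndependent_fin2.mp hind
  simp only [Matrix.cons_val_one, Matrix.head_cons, Matrix.cons_val_zero] at h2
  obtain ⟨hτ0, hστ⟩ := h2
  have hσ0 : matrixForm Γ σ ≠ 0 := fun h => hστ 0 (by rw [zero_smul, h])
  set D : Fin ℓ → Bool := bxor σ τ with hDdef
  set P : Finset (Fin ℓ) := Finset.univ.filter (fun i => D i = true) with hPdef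
  have hPcard : P.card = wt D := rfl
  have hDmem : ∀ i, i ∈ P ↔ D i = true := by
    intro i; rw [hPdef]; simp
  -- minimality gives proportionality for closer pairs
  have hdep : ∀ u v : Fin ℓ → Bool, wt u % 2 = wt v % 2 → wt (bxor u v) < wt D →
      matrixForm Γ v = 0 ∨ ∃ a : ℂ, matrixForm Γ u = a • matrixForm Γ v := by
    intro u v hp hlt
    by_contra hcon
    push_neg at hcon
    obtain ⟨hv0, huv⟩ := hcon
    have hli : LinearIndependent ℂ ![matrixForm Γ u, matrixForm Γ v] := by
      rw [linearIndependent_fin2]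
      simp only [Matrix.cons_val_one, Matrix.head_cons, Matrix.cons_val_zero]
      exact ⟨hv0, fun a h => huv a h.symm⟩
    exact absurd (hmin u v hp hli) (by omega)
  have hdeven : wt D % 2 = 0 := by
    have h := wt_parity σ τ
    rw [← hDdef] at h
    omega
  have hdne : wt D ≠ 0 := by
    intro h0
    have hfe : σ = τ := by
      funext i
      by_contra hi
      have hDi : D i = true := by
        rw [hDdef]; simp only [bxor]
        cases hσi : σ i <;> cases hτi : τ i <;> simp_all
      have hiP : i ∈ P := (hDmem i).mpr hDi
      have := Finset.card_pos.mpr ⟨i, hiP⟩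
      omega
    exact hστ 1 (by rw [one_smul, hfe])
  have hd4 : 4 ≤ wt D := by omega
  have hPeven : Even P.card := by rw [hPcard]; exact Nat.even_iff.mpr hdeven
  obtain ⟨p, hp, q, hq, hpq⟩ := Finset.one_lt_card.mp (show 1 < P.card by omega)
  -- boolean identities
  have hbx1 : ∀ r s : Fin ℓ, bxor (bxor (bxor σ (unit r)) (unit s)) σ
      = bxor (unit r) (unit s) := by
    intro r s; funext i; simp only [bxor, unit]
    cases σ i <;> cases h1 : decide (i = r) <;> cases h2 : decide (i = s) <;> rfl
  have hbx2 : ∀ r s : Fin ℓ, bxor (bxor (bxor σ (unit r)) (unit s)) τ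
      = bxor (bxor D (unit r)) (unit s) := by
    intro r s; funext i; simp only [bxor, unit, hDdef]
    cases σ i <;> cases τ i <;> cases h1 : decide (i = r) <;> cases h2 : decide (i = s) <;> rfl
  have hbx3 : ∀ r s : Fin ℓ, bxor (bxor τ (unit r)) (bxor σ (unit s))
      = bxor (bxor D (unit r)) (unit s) := by
    intro r s; funext i; simp only [bxor, unit, hDdef]
    cases σ i <;> cases τ i <;> cases h1 : decide (i = r) <;> cases h2 : decide (i = s) <;> rfl
  have hbx4 : ∀ r s : Fin ℓ, bxor (bxor σ (unit r)) (bxor σ (unit s))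
      = bxor (unit r) (unit s) := by
    intro r s; funext i; simp only [bxor, unit]
    cases σ i <;> cases h1 : decide (i = r) <;> cases h2 : decide (i = s) <;> rfl
  have hbx5 : ∀ r : Fin ℓ, bxor (bxor σ (unit r)) (unit r) = σ := by
    intro r; funext i; simp only [bxor, unit]
    cases σ i <;> cases h1 : decide (i = r) <;> rfl
  have hbx6 : ∀ r : Fin ℓ, bxor (bxor (bxor σ (unit r)) D) (unit r) = τ := by
    intro r; funext i; simp only [bxor, unit, hDdef]
    cases σ i <;> cases τ i <;> cases h1 : decide (i = r) <;> rfl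
  have hbx8 : ∀ r : Fin ℓ, bxor (bxor σ (unit r)) D = bxor τ (unit r) := by
    intro r; funext i; simp only [bxor, unit, hDdef]
    cases σ i <;> cases τ i <;> cases h1 : decide (i = r) <;> rfl
  -- rows between σ and τ vanish
  have hrow0 : ∀ r s : Fin ℓ, r ∈ P → s ∈ P → r ≠ s →
      matrixForm Γ (bxor (bxor σ (unit r)) (unit s)) = 0 := by
    intro r s hr hs hrs
    have hDr : D r = true := (hDmem r).mp hr
    have hDs : D s = true := (hDmem s).mp hs
    have hpar1 : wt (bxor (bxor σ (unit r)) (unit s)) % 2 = wt σ % 2 := by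
      have h1 := wt_parity (bxor σ (unit r)) (unit s)
      have h2 := wt_parity σ (unit r)
      rw [wt_unit] at h1 h2
      omega
    have hw1 : wt (bxor (bxor (bxor σ (unit r)) (unit s)) σ) = 2 := by
      rw [hbx1 r s]; exact wt_pair hrs
    have hw2 : wt (bxor (bxor (bxor σ (unit r)) (unit s)) τ) = wt D - 2 := by
      rw [hbx2 r s]; exact wt_dist D hDr hDs hrs
    have e1 := hdep (bxor (bxor σ (unit r)) (unit s)) σ hpar1 (by rw [hw1]; omega)
    have e2 := hdep (bxor (bxor σ (unit r)) (unit s)) τ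
      (by rw [hpar1]; exact hpp) (by rw [hw2]; omega)
    rcases e1 with h | ⟨a, ha⟩
    · exact absurd h hσ0
    rcases e2 with h | ⟨b, hb⟩
    · exact absurd h hτ0
    by_contra hw0
    have ha0 : a ≠ 0 := by
      intro h0; rw [h0, zero_smul] at ha; exact hw0 ha
    apply hστ (a⁻¹ * b)
    rw [mul_smul, ← hb, ha, ← mul_smul, inv_mul_cancel₀ ha0, one_smul]
  set S0 : Finset (Fin n × Fin ℓ) := P.image (fun r' => ((⟨0, hz⟩ : Fin n), r')) with hS0def
  -- the key contradiction
  have key : ∀ r : Fin ℓ, r ∈ P →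
      (matrixForm Γ (bxor σ (unit r)) = 0 ∨
        ∃ μ : ℂ, matrixForm Γ (bxor τ (unit r)) = μ • matrixForm Γ (bxor σ (unit r))) →
      False := by
    intro r hr hC
    apply hτ0
    funext c
    obtain ⟨c0, hc0⟩ : ∃ c0, matrixForm Γ σ c0 ≠ 0 := by
      by_contra hall
      push_neg at hall
      exact hσ0 (funext fun c' => by simpa using hall c')
    obtain ⟨Q, hQ1, hQ2⟩ := cflip_realize hz c0 c
    have hmain := key_compute hz Γ hmgi σ τ D (bxor σ (unit r)) P S0 hS0def hDmem hPeven r hr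
      (fun b hb hbr => hrow0 r b hr hb (Ne.symm hbr))
      (hbx5 r) (hbx6 r) (hbx8 r) hC c0 Q hQ1
    rw [hQ2] at hmain
    have h1 : matrixForm Γ σ c0 * matrixForm Γ τ c = 0 := hmain
    rcases mul_eq_zero.mp h1 with h | h
    · exact absurd h hc0
    · simpa using h
  -- establish the hypothesis of `key` at `p` (or `q`)
  by_cases hs : matrixForm Γ (bxor σ (unit p)) = 0
  · exact key p hp (Or.inl hs)
  by_cases ht : matrixForm Γ (bxor τ (unit p)) = 0
  · exact key p hp (Or.inr ⟨0, by rw [ht, zero_smul]⟩)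
  by_cases hsq : matrixForm Γ (bxor σ (unit q)) = 0
  · exact key q hq (Or.inl hsq)
  have hDp : D p = true := (hDmem p).mp hp
  have hDq : D q = true := (hDmem q).mp hq
  have hw1 : wt (bxor (bxor σ (unit p)) (bxor σ (unit q))) = 2 := by
    rw [hbx4 p q]; exact wt_pair hpq
  have hw2 : wt (bxor (bxor τ (unit p)) (bxor σ (unit q))) = wt D - 2 := by
    rw [hbx3 p q]; exact wt_dist D hDp hDq hpq
  have hpar1 : wt (bxor σ (unit p)) % 2 = wt (bxor σ (unit q)) % 2 := by
    have h1 := wt_parity σ (unit p)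
    have h2 := wt_parity σ (unit q)
    rw [wt_unit] at h1 h2
    omega
  have hpar2 : wt (bxor τ (unit p)) % 2 = wt (bxor σ (unit q)) % 2 := by
    have h1 := wt_parity τ (unit p)
    have h2 := wt_parity σ (unit q)
    rw [wt_unit] at h1 h2
    omega
  obtain ⟨a, ha⟩ : ∃ a : ℂ,
      matrixForm Γ (bxor σ (unit p)) = a • matrixForm Γ (bxor σ (unit q)) := by
    rcases hdep _ _ hpar1 (by rw [hw1]; omega) with h | h
    · exact absurd h hsq
    · exact h
  obtain ⟨b, hb⟩ : ∃ b : ℂ,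
      matrixForm Γ (bxor τ (unit p)) = b • matrixForm Γ (bxor σ (unit q)) := by
    rcases hdep _ _ hpar2 (by rw [hw2]; omega) with h | h
    · exact absurd h hsq
    · exact h
  have ha0 : a ≠ 0 := by
    intro h0; rw [h0, zero_smul] at ha; exact hs ha
  refine key p hp (Or.inr ⟨b * a⁻¹, ?_⟩)
  rw [hb, ha, smul_smul, mul_assoc, inv_mul_cancel₀ ha0, mul_one]


end Matchgate
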